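/- The boundary dressing function factorizes: with μ := sinh(h) sinh(hα) / (sinh(ζ − hα/2) sinh(ζ + hα/2)), one has, for every u ∈ ℂ, 1 − μ · sinh(u − h/2) sinh(u + h(α − 1/2)) / (sinh(h) sinh(hα)) = sinh(u + h(α−1)/2 − ζ) sinh(u + h(α−1)/2 + ζ) / (sinh(hα/2 − ζ) sinh(hα/2 + ζ)). -/

import Mathlib

set_option maxHeartbeats 1000000 in
/-- The boundary dressing function factorizes. -/
theorem boundary_dressing_factorizes (h α ζ : ℂ)
    (hh : Complex.sinh h ≠ 0) (hα : Complex.sinh (h * α) ≠ 0)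
    (hζm : Complex.sinh (ζ - h * α / 2) ≠ 0) (hζp : Complex.sinh (ζ + h * α / 2) ≠ 0) :
    ∀ u : ℂ,
      1 - (Complex.sinh h * Complex.sinh (h * α) /
            (Complex.sinh (ζ - h * α / 2) * Complex.sinh (ζ + h * α / 2))) *
          (Complex.sinh (u - h / 2) * Complex.sinh (u + h * (α - 1 / 2)) /
            (Complex.sinh h * Complex.sinh (h * α)))
        = Complex.sinh (u + h * (α - 1) / 2 - ζ) * Complex.sinh (u + h * (α - 1) / 2 + ζ) /
            (Complex.sinh (h * α / 2 - ζ) * Complex.sinh (h * α / 2 + ζ)) := by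
  intro u
  have sinh_eq : ∀ z : ℂ, Complex.sinh z = (Complex.exp z - (Complex.exp z)⁻¹) / 2 :=
    fun z => by rw [Complex.sinh, Complex.exp_neg]
  have h1 : Complex.sinh (h * α / 2 - ζ) = -Complex.sinh (ζ - h * α / 2) := by
    rw [← Complex.sinh_neg]; ring_nf
  have h2 : Complex.sinh (h * α / 2 + ζ) = Complex.sinh (ζ + h * α / 2) := by ring_nf
  have aux : ∀ p q : ℂ, p ≠ 0 → q ≠ 0 →
      p * q * (p * q⁻¹ - (p * q⁻¹)⁻¹) = p ^ 2 - q ^ 2 := by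
    intro p q hp hq
    simp only [← div_eq_mul_inv, inv_div]
    rw [div_sub_div _ _ hq hp, ← mul_div_assoc, div_eq_iff (mul_ne_zero hq hp)]
    ring
  obtain ⟨a, ha⟩ : ∃ x : ℂ, Complex.exp (h / 2) = x := ⟨_, rfl⟩
  obtain ⟨b, hb⟩ : ∃ x : ℂ, Complex.exp (h * α / 2) = x := ⟨_, rfl⟩
  obtain ⟨c, hc⟩ : ∃ x : ℂ, Complex.exp ζ = x := ⟨_, rfl⟩
  obtain ⟨e, he⟩ : ∃ x : ℂ, Complex.exp u = x := ⟨_, rfl⟩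
  have ea : a ≠ 0 := ha ▸ Complex.exp_ne_zero _
  have eb : b ≠ 0 := hb ▸ Complex.exp_ne_zero _
  have ec : c ≠ 0 := hc ▸ Complex.exp_ne_zero _
  have ee : e ≠ 0 := he ▸ Complex.exp_ne_zero _
  have t3 : 2 * b * c * Complex.sinh (ζ - h * α / 2) = c ^ 2 - b ^ 2 := by
    rw [show ζ - h * α / 2 = ζ + -(h * α / 2) by ring, sinh_eq, Complex.exp_add,
      Complex.exp_neg]
    simp only [ha, hb, hc, he]
    linear_combination aux c b ec eb
  have t4 : 2 * b * c * Complex.sinh (ζ + h * α / 2) = b ^ 2 * c ^ 2 - 1 := by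
    apply mul_left_cancel₀ (pow_ne_zero 2 eb)
    rw [show ζ + h * α / 2 = ζ + h * α / 2 + h * α / 2 + -(h * α / 2) by ring, sinh_eq,
      Complex.exp_add, Complex.exp_add, Complex.exp_add, Complex.exp_neg]
    simp only [ha, hb, hc, he]
    linear_combination aux (c * b * b) b (by simp [ec, eb]) eb
  have t5 : 2 * a * e * Complex.sinh (u - h / 2) = e ^ 2 - a ^ 2 := by
    rw [show u - h / 2 = u + -(h / 2) by ring, sinh_eq, Complex.exp_add, Complex.exp_neg]
    simp only [ha, hb, hc, he]
    linear_combination aux e a ee ea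
  have t6 : 2 * a * e * b ^ 2 * Complex.sinh (u + h * (α - 1 / 2))
      = e ^ 2 * b ^ 4 - a ^ 2 := by
    rw [show u + h * (α - 1 / 2) = u + h * α / 2 + h * α / 2 + -(h / 2) by ring, sinh_eq,
      Complex.exp_add, Complex.exp_add, Complex.exp_add, Complex.exp_neg]
    simp only [ha, hb, hc, he]
    linear_combination aux (e * b * b) a (by simp [ee, eb]) ea
  have t7 : 2 * a * c * e * b * Complex.sinh (u + h * (α - 1) / 2 - ζ)
      = e ^ 2 * b ^ 2 - a ^ 2 * c ^ 2 := by
    rw [show u + h * (α - 1) / 2 - ζ = u + h * α / 2 + -(h / 2 + ζ) by ring, sinh_eq,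
      Complex.exp_add, Complex.exp_add, Complex.exp_neg, Complex.exp_add]
    simp only [ha, hb, hc, he]
    linear_combination aux (e * b) (a * c) (by simp [ee, eb]) (by simp [ea, ec])
  have t8 : 2 * a * e * b * c * Complex.sinh (u + h * (α - 1) / 2 + ζ)
      = e ^ 2 * b ^ 2 * c ^ 2 - a ^ 2 := by
    rw [show u + h * (α - 1) / 2 + ζ = u + h * α / 2 + ζ + -(h / 2) by ring, sinh_eq,
      Complex.exp_add, Complex.exp_add, Complex.exp_add, Complex.exp_neg]
    simp only [ha, hb, hc, he]
    linear_combination aux (e * b * c) a (by simp [ee, eb, ec]) ea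
  have hne : (4 : ℂ) * a ^ 2 * b ^ 2 * c ^ 2 * e ^ 2 ≠ 0 := by
    simp [ea, eb, ec, ee]
  have key : Complex.sinh (u - h / 2) * Complex.sinh (u + h * (α - 1 / 2))
      - Complex.sinh (ζ - h * α / 2) * Complex.sinh (ζ + h * α / 2)
      = Complex.sinh (u + h * (α - 1) / 2 - ζ) * Complex.sinh (u + h * (α - 1) / 2 + ζ) := by
    apply mul_left_cancel₀ hne
    linear_combination
      c ^ 2 * (2 * a * e * b ^ 2 * Complex.sinh (u + h * (α - 1 / 2))) * t5
      + c ^ 2 * (e ^ 2 - a ^ 2) * t6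
      - a ^ 2 * e ^ 2 * (2 * b * c * Complex.sinh (ζ + h * α / 2)) * t3
      - a ^ 2 * e ^ 2 * (c ^ 2 - b ^ 2) * t4
      - (2 * a * e * b * c * Complex.sinh (u + h * (α - 1) / 2 + ζ)) * t7
      - (e ^ 2 * b ^ 2 - a ^ 2 * c ^ 2) * t8
  rw [h1, h2]
  set A := Complex.sinh (ζ - h * α / 2) with hA
  set B := Complex.sinh (ζ + h * α / 2) with hB
  set P := Complex.sinh h with hP
  set Q := Complex.sinh (h * α) with hQ
  set T := Complex.sinh (u - h / 2) with hT
  set U := Complex.sinh (u + h * (α - 1 / 2)) with hU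
  set V := Complex.sinh (u + h * (α - 1) / 2 - ζ) with hV
  set W := Complex.sinh (u + h * (α - 1) / 2 + ζ) with hW
  field_simp
  linear_combination (-1 : ℂ) * key
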